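/- Let M be an n×n Hermitian matrix with M = g·Diag(ν)·g⁻¹ (g unitary), and let M_T = A*MA be its tridiagonalization via the cyclic subspace of e₁. If ν_i is a simple eigenvalue of M that is also an eigenvalue of M_T, and x ∈ ℂ^m is a unit eigenvector of M_T with M_T x = ν_i x, then |x₁| = |g_{1,i}|, i.e., the normalized eigenvectors of M and M_T corresponding to ν_i have the same absolute value of first entry. -/

import Mathlib

open Matrix BigOperators

noncomputable section

/-- The Gram–Schmidt orthonormalization of the Krylov vectors
`e₁, M e₁, M² e₁, ...` of a matrix `M`, as vectors in `EuclideanSpace ℂ (Fin (n+1))`. -/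
def krylovGS {n : ℕ} (M : Matrix (Fin (n + 1)) (Fin (n + 1)) ℂ) (m : ℕ) (j : Fin m) :
    EuclideanSpace ℂ (Fin (n + 1)) :=
  @InnerProductSpace.gramSchmidtNormed ℂ (EuclideanSpace ℂ (Fin (n + 1))) _ _ _ (Fin m) _
    (inferInstance : LocallyFiniteOrderBot (Fin m))
    (inferInstance : WellFoundedLT (Fin m))
    (fun l : Fin m =>
      (WithLp.equiv 2 (Fin (n + 1) → ℂ)).symm ((M ^ (l : ℕ)).mulVec (Pi.single 0 1))) j

open Submodule Set Module

section Krylov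
variable {K V : Type*} [Field K] [AddCommGroup V] [Module K V] [FiniteDimensional K V]

lemma krylov_span (T : V →ₗ[K] V) (u : V) (m : ℕ)
    (hm : m = finrank K (span K (Set.range fun j : ℕ => (T ^ j) u))) :
    span K (Set.range fun j : Fin m => (T ^ (j : ℕ)) u)
      = span K (Set.range fun j : ℕ => (T ^ j) u) := by
  set KS := span K (Set.range fun j : ℕ => (T ^ j) u) with hKS
  set P : ℕ → Submodule K V := fun k => span K ((fun j : ℕ => (T ^ j) u) '' Set.Iio k) with hP
  have hrange : Set.range (fun j : Fin m => (T ^ (j : ℕ)) u)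
      = (fun j : ℕ => (T ^ j) u) '' Set.Iio m := by
    ext v
    constructor
    · rintro ⟨j, rfl⟩; exact ⟨j, j.isLt, rfl⟩
    · rintro ⟨j, hj, rfl⟩; exact ⟨⟨j, hj⟩, rfl⟩
  rw [hrange]
  have hPmono : Monotone P := fun a b hab =>
    span_mono (Set.image_mono fun x hx => lt_of_lt_of_le hx hab)
  have hPle : ∀ k, P k ≤ KS := fun k => span_mono (by rintro v ⟨j, _, rfl⟩; exact ⟨j, rfl⟩)
  have hmem : ∀ j k, j < k → (T ^ j) u ∈ P k := fun j k hjk => subset_span ⟨j, hjk, rfl⟩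
  by_cases hc : ∃ k < m, (T ^ k) u ∈ P k
  · obtain ⟨k, hkm, hk⟩ := hc
    have hinv : ∀ v ∈ P k, T v ∈ P k := by
      intro v hv
      have : (P k).map T ≤ P k := by
        rw [hP]
        simp only [Submodule.map_span, ← Set.image_comp]
        apply span_le.2
        rintro w ⟨j, hj, rfl⟩
        have : (T ∘ fun j : ℕ => (T ^ j) u) j = (T ^ (j + 1)) u := by
          simp [pow_succ', Module.End.mul_apply]
        rw [this]
        rcases lt_or_eq_of_le (Nat.succ_le_of_lt hj) with h | h
        · exact hmem _ _ h
        · rw [show j + 1 = k from h]; exact hk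
      exact this ⟨v, hv, rfl⟩
    have hall : ∀ l, (T ^ l) u ∈ P k := by
      intro l
      induction l with
      | zero =>
        rcases Nat.eq_zero_or_pos k with rfl | hk0
        · simpa using hk
        · exact hmem 0 k hk0
      | succ l ih =>
        have : (T ^ (l + 1)) u = T ((T ^ l) u) := by simp [pow_succ', Module.End.mul_apply]
        rw [this]; exact hinv _ ih
    have hKSle : KS ≤ P k := span_le.2 (by rintro v ⟨j, rfl⟩; exact hall j)
    exact le_antisymm (hPle m) (hKSle.trans (hPmono hkm.le))
  · push_neg at hc
    have hrank : ∀ k ≤ m, k ≤ finrank K (P k) := by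
      intro k
      induction k with
      | zero => intro _; exact Nat.zero_le _
      | succ k ih =>
        intro hkm
        have hlt : P k < P (k + 1) := by
          refine lt_of_le_of_ne (hPmono k.le_succ) fun he => ?_
          exact hc k (lt_of_lt_of_le (Nat.lt_succ_self k) hkm)
            (he ▸ hmem k (k + 1) k.lt_succ_self)
        have h1 := Submodule.finrank_lt_finrank_of_lt hlt
        have h2 := ih (le_trans k.le_succ hkm)
        omega
    have h2 : finrank K KS ≤ finrank K (P m) := by rw [← hm]; exact hrank m le_rfl
    exact Submodule.eq_of_le_of_finrank_le (hPle m) h2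

lemma krylov_li (T : V →ₗ[K] V) (u : V) (m : ℕ)
    (hm : m = finrank K (span K (Set.range fun j : ℕ => (T ^ j) u))) :
    LinearIndependent K (fun j : Fin m => (T ^ (j : ℕ)) u) := by
  rw [linearIndependent_iff_card_eq_finrank_span]
  rw [Fintype.card_fin, Set.finrank, krylov_span T u m hm, hm]

end Krylov

section GS

/-- `gramSchmidtNormed` specialized to `Fin m`-indexed families in Euclidean space,
with the instances fixed. -/
def myGS {m N : ℕ} (f : Fin m → EuclideanSpace ℂ (Fin N)) :
    Fin m → EuclideanSpace ℂ (Fin N) :=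
  @InnerProductSpace.gramSchmidtNormed ℂ (EuclideanSpace ℂ (Fin N)) _ _ _ (Fin m) _
    (inferInstance : LocallyFiniteOrderBot (Fin m))
    (inferInstance : WellFoundedLT (Fin m)) f

lemma myGS_orthonormal {m N : ℕ} {f : Fin m → EuclideanSpace ℂ (Fin N)}
    (h : LinearIndependent ℂ f) : Orthonormal ℂ (myGS f) :=
  @InnerProductSpace.gramSchmidtNormed_orthonormal ℂ (EuclideanSpace ℂ (Fin N)) _ _ _ (Fin m) _
    (inferInstance : LocallyFiniteOrderBot (Fin m))
    (inferInstance : WellFoundedLT (Fin m)) f h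

lemma myGS_span {m N : ℕ} (f : Fin m → EuclideanSpace ℂ (Fin N)) :
    span ℂ (Set.range (myGS f)) = span ℂ (Set.range f) := by
  unfold myGS
  rw [@InnerProductSpace.span_gramSchmidtNormed_range ℂ (EuclideanSpace ℂ (Fin N)) _ _ _ (Fin m) _
      (inferInstance : LocallyFiniteOrderBot (Fin m))
      (inferInstance : WellFoundedLT (Fin m)) f,
    @InnerProductSpace.span_gramSchmidt ℂ (EuclideanSpace ℂ (Fin N)) _ _ _ (Fin m) _
      (inferInstance : LocallyFiniteOrderBot (Fin m))
      (inferInstance : WellFoundedLT (Fin m)) f]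

lemma myGS_zero {m N : ℕ} (hm0 : 0 < m) (f : Fin m → EuclideanSpace ℂ (Fin N)) :
    myGS f ⟨0, hm0⟩ = (‖f ⟨0, hm0⟩‖ : ℂ)⁻¹ • f ⟨0, hm0⟩ := by
  have hIio : Finset.Iio (⟨0, hm0⟩ : Fin m) = ∅ := by
    apply Finset.eq_empty_iff_forall_notMem.2
    intro a ha
    have h := Finset.mem_Iio.mp ha
    have h2 : (a : ℕ) < 0 := Fin.lt_def.mp h
    omega
  have hgs : @InnerProductSpace.gramSchmidt ℂ (EuclideanSpace ℂ (Fin N)) _ _ _ (Fin m) _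
      (inferInstance : LocallyFiniteOrderBot (Fin m))
      (inferInstance : WellFoundedLT (Fin m)) f ⟨0, hm0⟩ = f ⟨0, hm0⟩ := by
    rw [@InnerProductSpace.gramSchmidt_def ℂ (EuclideanSpace ℂ (Fin N)) _ _ _ (Fin m) _
      (inferInstance : LocallyFiniteOrderBot (Fin m))
      (inferInstance : WellFoundedLT (Fin m)) f ⟨0, hm0⟩, hIio]
    simp
  unfold myGS InnerProductSpace.gramSchmidtNormed
  rw [hgs]
  rfl

end GS

/-- let `M = g Diag(ν) g⁻¹` be Hermitian (`g` unitary) with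
tridiagonalization `M_T = A* M A` via the cyclic subspace of `e₁`. If `ν_i` is a simple
eigenvalue of `M` which is also an eigenvalue of `M_T`, and `x` is a unit eigenvector of
`M_T` for `ν_i`, then `|x₁| = |g_{1,i}|`. -/
theorem stmt9 {n : ℕ} (M : Matrix (Fin (n + 1)) (Fin (n + 1)) ℂ) (hM : M.IsHermitian)
    (g : Matrix (Fin (n + 1)) (Fin (n + 1)) ℂ)
    (hg : g ∈ Matrix.unitaryGroup (Fin (n + 1)) ℂ)
    (ν : Fin (n + 1) → ℝ)
    (hspec : M = g * Matrix.diagonal (fun i => (ν i : ℂ)) * g⁻¹)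
    (m : ℕ) (hm0 : 0 < m)
    (hm : m = Module.finrank ℂ
      (Submodule.span ℂ (Set.range fun j : ℕ => (M ^ j).mulVec (Pi.single 0 1))))
    (A : Matrix (Fin (n + 1)) (Fin m) ℂ)
    (hA : ∀ i j, A i j = (WithLp.equiv 2 (Fin (n + 1) → ℂ)) (krylovGS M m j) i)
    (i : Fin (n + 1)) (hsimple : ∀ j : Fin (n + 1), j ≠ i → ν j ≠ ν i)
    (hieig : (ν i : ℂ) ∈ spectrum ℂ (Aᴴ * M * A))
    (x : Fin m → ℂ) (hx : ∑ j, ‖x j‖ ^ 2 = 1)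
    (heig : (Aᴴ * M * A).mulVec x = (ν i : ℂ) • x) :
    ‖x ⟨0, hm0⟩‖ = ‖g 0 i‖ := by
  haveI : NeZero m := ⟨hm0.ne'⟩
  set z0 : Fin m := ⟨0, hm0⟩ with hz0
  set u : Fin (n + 1) → ℂ := Pi.single 0 1 with hu
  set E := WithLp.linearEquiv 2 ℂ (Fin (n + 1) → ℂ) with hE
  set T : EuclideanSpace ℂ (Fin (n + 1)) →ₗ[ℂ] EuclideanSpace ℂ (Fin (n + 1)) :=
    E.symm.toLinearMap ∘ₗ M.mulVecLin ∘ₗ E.toLinearMap with hTdef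
  have hTj : ∀ j : ℕ, (T ^ j) (E.symm u) = E.symm ((M ^ j).mulVec u) := by
    intro j
    induction j with
    | zero => simp
    | succ j ih =>
      rw [pow_succ' T j, Module.End.mul_apply, ih, pow_succ' M j]
      simp [hTdef, Matrix.mulVec_mulVec]
  set KV := span ℂ (Set.range fun j : ℕ => (T ^ j) (E.symm u)) with hKV
  have hmapKV : KV.map E.toLinearMap
      = span ℂ (Set.range fun j : ℕ => (M ^ j).mulVec u) := by
    rw [hKV, Submodule.map_span]
    congr 1
    ext v
    simp only [Set.mem_image, Set.mem_range]
    constructor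
    · rintro ⟨_, ⟨j, rfl⟩, rfl⟩
      exact ⟨j, by rw [hTj j]; simp⟩
    · rintro ⟨j, rfl⟩
      exact ⟨(T ^ j) (E.symm u), ⟨j, rfl⟩, by rw [hTj j]; simp⟩
  have hfin : m = finrank ℂ KV := by
    rw [hm, ← hmapKV, LinearEquiv.finrank_map_eq E KV]
  have hLI := krylov_li T (E.symm u) m hfin
  have hSP := krylov_span T (E.symm u) m hfin
  set f : Fin m → EuclideanSpace ℂ (Fin (n + 1)) :=
    fun l : Fin m =>
      (WithLp.equiv 2 (Fin (n + 1) → ℂ)).symm ((M ^ (l : ℕ)).mulVec u) with hf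
  have hfeq : f = fun l : Fin m => (T ^ (l : ℕ)) (E.symm u) := by
    funext l; rw [hTj]; rfl
  have hLIf : LinearIndependent ℂ f := hfeq ▸ hLI
  set B : Fin m → EuclideanSpace ℂ (Fin (n + 1)) := krylovGS M m with hB
  have hBgs : B = myGS f := rfl
  have hON : Orthonormal ℂ B := hBgs ▸ myGS_orthonormal hLIf
  have hspanB : span ℂ (Set.range B) = KV := by
    rw [hBgs, myGS_span f, hfeq]
    exact hSP
  have hA' : ∀ k l, A k l = B l k := by
    intro k l
    rw [hA k l]
    rfl
  have hinner : ∀ a b : Fin m,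
      (∑ k, (starRingEnd ℂ) (B a k) * B b k) = if a = b then 1 else 0 := by
    intro a b
    have h := orthonormal_iff_ite.mp hON a b
    simpa only [PiLp.inner_apply, RCLike.inner_apply, mul_comm] using h
  have hAHA : Aᴴ * A = 1 := by
    ext a b
    rw [Matrix.mul_apply, Matrix.one_apply]
    simp only [Matrix.conjTranspose_apply, hA']
    simpa using hinner a b
  set K' := span ℂ (Set.range fun j : ℕ => (M ^ j).mulVec u) with hK'
  set col : Fin m → (Fin (n + 1) → ℂ) := fun l => E (B l) with hcoldef
  have hcol : ∀ l k, col l k = A k l := by intro l k; rw [hA']; rfl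
  have hcolspan : span ℂ (Set.range col) = K' := by
    have h1 : Submodule.map E.toLinearMap (span ℂ (Set.range B)) = span ℂ (Set.range col) := by
      rw [Submodule.map_span, ← Set.range_comp]
      rfl
    rw [← h1, hspanB, hmapKV]
  have hcolmem : ∀ l, col l ∈ K' := fun l => hcolspan ▸ subset_span ⟨l, rfl⟩
  have hMK : ∀ v ∈ K', M.mulVec v ∈ K' := by
    intro v hv
    have hmap : K'.map M.mulVecLin ≤ K' := by
      rw [hK', Submodule.map_span]
      apply span_le.2
      rintro w ⟨_, ⟨j, rfl⟩, rfl⟩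
      refine subset_span ⟨j + 1, ?_⟩
      simp [Matrix.mulVecLin_apply, Matrix.mulVec_mulVec, pow_succ']
    exact hmap ⟨v, hv, rfl⟩
  have hcol_eq : ∀ l, col l = A.mulVec (Pi.single l 1) := by
    intro l; ext k
    rw [hcol]
    simp [Matrix.mulVec_single]
  have hproj : ∀ v ∈ K', A.mulVec (Aᴴ.mulVec v) = v := by
    intro v hv
    rw [← hcolspan] at hv
    induction hv using Submodule.span_induction with
    | mem w hw =>
      obtain ⟨l, rfl⟩ := hw
      rw [hcol_eq l, Matrix.mulVec_mulVec, Matrix.mulVec_mulVec, Matrix.mul_assoc,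
        hAHA, Matrix.mul_one]
    | zero => simp
    | add a b _ _ ha hb => rw [Matrix.mulVec_add, Matrix.mulVec_add, ha, hb]
    | smul c a _ ha => rw [Matrix.mulVec_smul, Matrix.mulVec_smul, ha]
  set y := A.mulVec x with hy
  have hyK : y ∈ K' := by
    have hsum : y = ∑ l, x l • col l := by
      ext k
      simp [hy, Matrix.mulVec, dotProduct, hcol, mul_comm]
    rw [hsum]
    exact Submodule.sum_mem _ fun l _ => Submodule.smul_mem _ _ (hcolmem l)
  have heigy : M.mulVec y = (ν i : ℂ) • y := by
    have h1 : Aᴴ.mulVec (M.mulVec y) = (ν i : ℂ) • x := by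
      rw [hy]
      rw [show Aᴴ *ᵥ (M *ᵥ (A *ᵥ x)) = (Aᴴ * M * A) *ᵥ x by
        rw [← Matrix.mulVec_mulVec, ← Matrix.mulVec_mulVec]]
      exact heig
    have h2 : M.mulVec y = A.mulVec (Aᴴ.mulVec (M.mulVec y)) := (hproj _ (hMK y hyK)).symm
    rw [h2, h1, Matrix.mulVec_smul]
  have hgg : gᴴ * g = 1 := by
    have h := Matrix.mem_unitaryGroup_iff'.mp hg
    rwa [Matrix.star_eq_conjTranspose] at h
  have hgg' : g * gᴴ = 1 := by
    have h := Matrix.mem_unitaryGroup_iff.mp hg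
    rwa [Matrix.star_eq_conjTranspose] at h
  have hginv : g⁻¹ = gᴴ := Matrix.inv_eq_left_inv hgg
  have hMg : M * g = g * Matrix.diagonal (fun j => (ν j : ℂ)) := by
    rw [hspec, hginv, Matrix.mul_assoc (g * Matrix.diagonal fun j => (ν j : ℂ)) gᴴ g,
      hgg, Matrix.mul_one]
  set w := gᴴ.mulVec y with hw
  have hyw : y = g.mulVec w := by
    rw [hw, Matrix.mulVec_mulVec, hgg', Matrix.one_mulVec]
  have hDw : (Matrix.diagonal fun j => (ν j : ℂ)).mulVec w = (ν i : ℂ) • w := by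
    have h3 : M.mulVec y = g.mulVec ((Matrix.diagonal fun j => (ν j : ℂ)).mulVec w) := by
      conv_lhs => rw [hyw]
      rw [Matrix.mulVec_mulVec, hMg, ← Matrix.mulVec_mulVec]
    have h4 : gᴴ.mulVec (M.mulVec y) = (Matrix.diagonal fun j => (ν j : ℂ)).mulVec w := by
      rw [h3, Matrix.mulVec_mulVec, hgg, Matrix.one_mulVec]
    rw [← h4, heigy, Matrix.mulVec_smul]
  have hwj : ∀ j, j ≠ i → w j = 0 := by
    intro j hj
    have h5 := congrFun hDw j
    rw [Matrix.mulVec_diagonal] at h5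
    have h6 : ((ν j : ℂ) - (ν i : ℂ)) * w j = 0 := by
      rw [sub_mul, h5, Pi.smul_apply, smul_eq_mul, sub_self]
    rcases mul_eq_zero.mp h6 with h | h
    · exact absurd (Complex.ofReal_inj.mp (sub_eq_zero.mp h)) (hsimple j hj)
    · exact h
  have hyk : ∀ k, y k = g k i * w i := by
    intro k
    conv_lhs => rw [hyw]
    show (∑ j, g k j * w j) = g k i * w i
    apply Finset.sum_eq_single i
    · intro j _ hj
      rw [hwj j hj, mul_zero]
    · intro h; exact absurd (Finset.mem_univ i) h
  have hyy : ∑ k, (starRingEnd ℂ) (y k) * y k = 1 := by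
    have h7 : ∑ k, (starRingEnd ℂ) (y k) * y k = dotProduct (star y) y := by
      simp [dotProduct, Pi.star_apply, RCLike.star_def]
    rw [h7, hy, Matrix.star_mulVec, Matrix.dotProduct_mulVec, Matrix.vecMul_vecMul,
      hAHA, Matrix.vecMul_one]
    have h8 : ∀ l : Fin m, star (x l) * x l = ((‖x l‖ ^ 2 : ℝ) : ℂ) := by
      intro l
      rw [RCLike.star_def, mul_comm, Complex.mul_conj, Complex.sq_norm]
    simp only [dotProduct, Pi.star_apply]
    rw [Finset.sum_congr rfl fun l _ => h8 l, ← Complex.ofReal_sum]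
    rw [hx, Complex.ofReal_one]
  have hgi : ∑ k, (starRingEnd ℂ) (g k i) * g k i = 1 := by
    have h9 := congrFun (congrFun hgg i) i
    rw [Matrix.mul_apply] at h9
    simp only [Matrix.conjTranspose_apply, RCLike.star_def] at h9
    rw [h9, Matrix.one_apply_eq]
  have habsw : ‖w i‖ = 1 := by
    have h10 : ((starRingEnd ℂ) (w i) * w i) * (∑ k, (starRingEnd ℂ) (g k i) * g k i) = 1 := by
      rw [← hyy, Finset.mul_sum]
      apply Finset.sum_congr rfl
      intro k _
      rw [hyk k, _root_.map_mul]
      ring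
    rw [hgi, mul_one] at h10
    rw [mul_comm, Complex.mul_conj] at h10
    have h11 : Complex.normSq (w i) = 1 := by exact_mod_cast h10
    have h12 : ‖w i‖ ^ 2 = 1 := by rw [Complex.sq_norm]; exact h11
    have h13 : ‖w i‖ = Real.sqrt 1 := by
      rw [← h12, Real.sqrt_sq (norm_nonneg _)]
    simpa using h13
  have hBz0 : ∀ k, B z0 k = u k := by
    intro k
    have hfz0 : f ⟨0, hm0⟩ = (WithLp.equiv 2 (Fin (n + 1) → ℂ)).symm u := by
      rw [hf]
      simp only [Fin.val_mk, pow_zero, Matrix.one_mulVec]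
    have hnorm : ‖f ⟨0, hm0⟩‖ = 1 := by
      rw [hfz0, hu]
      rw [show (WithLp.equiv 2 (Fin (n + 1) → ℂ)).symm (Pi.single (0 : Fin (n + 1)) (1 : ℂ))
        = EuclideanSpace.single (0 : Fin (n + 1)) (1 : ℂ) from rfl]
      rw [EuclideanSpace.norm_single]
      exact norm_one
    rw [hBgs, hz0, myGS_zero hm0 f, hnorm]
    simp only [Complex.ofReal_one, inv_one, one_smul]
    rw [hfz0]
    rfl
  have hA0 : ∀ l, A 0 l = if l = z0 then 1 else 0 := by
    intro l
    by_cases h : l = z0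
    · subst h
      rw [if_pos rfl, hA', hBz0, hu]
      simp
    · rw [if_neg h, hA']
      have h12 := hinner z0 l
      rw [if_neg (fun he => h he.symm)] at h12
      have h13 : ∀ k, (starRingEnd ℂ) (B z0 k) * B l k
          = (starRingEnd ℂ) (u k) * B l k := by intro k; rw [hBz0]
      rw [Finset.sum_congr rfl fun k _ => h13 k] at h12
      rw [hu] at h12
      simpa [Pi.single_apply, Finset.sum_ite_eq] using h12
  have hy0 : y 0 = x z0 := by
    rw [hy]
    show (∑ l, A 0 l * x l) = x z0
    rw [Finset.sum_congr rfl fun l _ => by rw [hA0 l]]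
    simp [Finset.sum_ite_eq]
  have hfinal : x z0 = g 0 i * w i := by rw [← hy0, hyk 0]
  rw [hfinal, norm_mul, habsw, mul_one]
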